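/- Let G be an abelian group and φ : G → G a homomorphism. Let G∞ = lim→(G, φ) be the direct limit of the sequence G →φ G →φ G →⋯, with canonical maps φ_{n,∞} : G → G∞, and let φ∞ : G∞ → G∞ be the induced homomorphism satisfying φ∞ ∘ φ_{n,∞} = φ_{n,∞} ∘ φ. Then the map φ_{1,∞} restricts to an isomorphism of ker(1 − φ) onto ker(1 − φ∞). -/

import Mathlib

/-- the canonical map `φ_{1,∞}` of the direct limit of the constant
system `G →φ G →φ ⋯` restricts to an isomorphism of `ker(1 - φ)` onto `ker(1 - φ∞)`. -/
theorem stmt_0 {G L : Type*} [AddCommGroup G] [AddCommGroup L]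
    (φ : G →+ G) (j : ℕ → G →+ L)
    (hcompat : ∀ n, j n = (j (n + 1)).comp φ)
    (hsurj : ∀ x : L, ∃ n g, j n g = x)
    (hker : ∀ n g, j n g = 0 → ∃ k, (⇑φ)^[k] g = 0)
    (φinf : L →+ L)
    (hφinf : ∀ n, φinf.comp (j n) = (j n).comp φ) :
    ∃ e : AddMonoidHom.ker (AddMonoidHom.id G - φ) ≃+
        AddMonoidHom.ker (AddMonoidHom.id L - φinf),
      ∀ g : AddMonoidHom.ker (AddMonoidHom.id G - φ), (e g : L) = j 1 (g : G) := by
  have hmemG : ∀ g : G, g ∈ AddMonoidHom.ker (AddMonoidHom.id G - φ) ↔ φ g = g := by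
    intro g
    rw [AddMonoidHom.mem_ker, AddMonoidHom.sub_apply, AddMonoidHom.id_apply, sub_eq_zero, eq_comm]
  have hmemL : ∀ x : L, x ∈ AddMonoidHom.ker (AddMonoidHom.id L - φinf) ↔ φinf x = x := by
    intro x
    rw [AddMonoidHom.mem_ker, AddMonoidHom.sub_apply, AddMonoidHom.id_apply, sub_eq_zero, eq_comm]
  -- shift lemma
  have hshift : ∀ n k (g : G), j n g = j (n + k) ((⇑φ)^[k] g) := by
    intro n k
    induction k with
    | zero => simp
    | succ k ih =>
      intro g
      show j n g = j (n + k + 1) ((⇑φ)^[k + 1] g)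
      rw [Function.iterate_succ_apply', ← AddMonoidHom.comp_apply, ← hcompat, ← ih]
  -- constancy on fixed points
  have hfix : ∀ (a : G), φ a = a → ∀ m, j m a = j 0 a := by
    intro a ha m
    induction m with
    | zero => rfl
    | succ m ih =>
      rw [← ih]
      conv_lhs => rw [← ha]
      rw [← AddMonoidHom.comp_apply, ← hcompat]
  -- the forward map lands in the kernel
  have hmap : ∀ g : AddMonoidHom.ker (AddMonoidHom.id G - φ),
      j 1 (g : G) ∈ AddMonoidHom.ker (AddMonoidHom.id L - φinf) := by
    intro ⟨g, hg⟩
    rw [hmemG] at hg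
    rw [hmemL]
    have := DFunLike.congr_fun (hφinf 1) g
    simp only [AddMonoidHom.coe_comp, Function.comp_apply] at this
    rw [this, hg]
  let F : AddMonoidHom.ker (AddMonoidHom.id G - φ) →+
      AddMonoidHom.ker (AddMonoidHom.id L - φinf) :=
    ((j 1).comp (AddMonoidHom.ker (AddMonoidHom.id G - φ)).subtype).codRestrict _ hmap
  have hinj : Function.Injective F := by
    intro a b hab
    have h : j 1 ((a : G) - b) = 0 := by
      have : (F a : L) = F b := congrArg Subtype.val hab
      simp only [F, AddMonoidHom.codRestrict_apply, AddMonoidHom.comp_apply,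
        AddSubgroup.coe_subtype] at this
      rw [map_sub]
      exact sub_eq_zero.mpr this
    obtain ⟨k, hk⟩ := hker 1 _ h
    have ha := (hmemG _).mp a.2
    have hb := (hmemG _).mp b.2
    have hfixab : φ ((a : G) - b) = (a : G) - b := by rw [map_sub, ha, hb]
    rw [Function.iterate_fixed hfixab] at hk
    exact Subtype.ext (sub_eq_zero.mp hk)
  have hsurjF : Function.Surjective F := by
    rintro ⟨x, hx⟩
    rw [hmemL] at hx
    obtain ⟨n, g, hg⟩ := hsurj x
    have h0 : j n (φ g - g) = 0 := by
      have := DFunLike.congr_fun (hφinf n) g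
      simp only [AddMonoidHom.coe_comp, Function.comp_apply] at this
      rw [map_sub, ← this, hg, hx, sub_self]
    obtain ⟨k, hk⟩ := hker n _ h0
    set h : G := (⇑φ)^[k] g with hh
    have hitsub : ∀ (m : ℕ) (a b : G), (⇑φ)^[m] (a - b) = (⇑φ)^[m] a - (⇑φ)^[m] b := by
      intro m
      induction m with
      | zero => intro a b; rfl
      | succ m ih => intro a b; simp [Function.iterate_succ_apply, map_sub, ih]
    have hfh : φ h = h := by
      have : (⇑φ)^[k] (φ g) - (⇑φ)^[k] g = 0 := by rw [← hitsub, hk]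
      have h2 : φ ((⇑φ)^[k] g) = (⇑φ)^[k] (φ g) :=
        (Function.iterate_succ_apply' φ k g).symm.trans (Function.iterate_succ_apply φ k g)
      rw [hh, h2, sub_eq_zero.mp this]
    have hval : j 1 h = x := by
      rw [hfix h hfh 1, ← hfix h hfh (n + k), ← hshift, hg]
    exact ⟨⟨h, (hmemG h).mpr hfh⟩, Subtype.ext hval⟩
  refine ⟨AddEquiv.ofBijective F ⟨hinj, hsurjF⟩, fun g => rfl⟩
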